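/- (Jensen bound for the AR(1) differential entropy sum.) Let φ(x) := (1/2)·log₂(2·π·e·x) for x > 0. For all real p with 0 < p ≤ 1/2 and all real ρ with 0 < ρ < 1, the series Σ_{k=1}^∞ φ(1 − ρ^{4k})·2·C_{k−1}·((1−p)·p)^k converges and satisfies Σ_{k=1}^∞ φ(1 − ρ^{4k})·2·C_{k−1}·((1−p)·p)^k ≤ 2·p·φ( ((1 − 4·(1−p)·p·ρ⁴)^{1/2} − (1 − 2·p)) / (2·p) ), where C_t denotes the t-th Catalan number. -/

import Mathlib

open Finset

/-- `φ(x) = (1/2)·log₂(2πe·x)`, the differential entropy of a Gaussian with variance `x`. -/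
noncomputable def gaussEnt (x : ℝ) : ℝ :=
  (1 / 2) * Real.logb 2 (2 * Real.pi * Real.exp 1 * x)

lemma triangle_le (f : ℕ → ℝ) (hf : ∀ k, 0 ≤ f k) (N : ℕ) :
    ∑ n ∈ range N, ∑ ij ∈ antidiagonal n, f ij.1 * f ij.2
      ≤ (∑ k ∈ range N, f k) ^ 2 := by
  have h1 : ∑ n ∈ range N, ∑ ij ∈ antidiagonal n, f ij.1 * f ij.2
      = ∑ ij ∈ (range N).biUnion (fun n => antidiagonal n), f ij.1 * f ij.2 := by
    rw [Finset.sum_biUnion]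
    intro a _ b _ hab
    simp only [Finset.disjoint_left, Finset.HasAntidiagonal.mem_antidiagonal]
    omega
  rw [h1, sq, Finset.sum_mul_sum, ← Finset.sum_product']
  apply Finset.sum_le_sum_of_subset_of_nonneg
  · intro ij hij
    simp only [Finset.mem_biUnion, Finset.mem_range, Finset.HasAntidiagonal.mem_antidiagonal,
      Finset.mem_product] at hij ⊢
    omega
  · intro i _ _
    exact mul_nonneg (hf _) (hf _)

lemma cat_term_eq (x : ℝ) (n : ℕ) :
    (catalan (n+1) : ℝ) * x ^ (n+1+1)
      = ∑ ij ∈ antidiagonal n,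
          ((catalan ij.1 : ℝ) * x ^ (ij.1+1)) * ((catalan ij.2 : ℝ) * x ^ (ij.2+1)) := by
  rw [catalan_succ']
  push_cast
  rw [Finset.sum_mul]
  refine Finset.sum_congr rfl fun ij hij => ?_
  have h := Finset.HasAntidiagonal.mem_antidiagonal.mp hij
  have hx : x ^ (n+1+1) = x ^ (ij.1+1) * x ^ (ij.2+1) := by
    rw [← pow_add]; congr 1; omega
  rw [hx]; ring

lemma catSum (x : ℝ) (hx0 : 0 ≤ x) (hx : x ≤ 1/4) :
    Summable (fun k : ℕ => (catalan k : ℝ) * x ^ (k+1)) ∧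
    ∑' k : ℕ, (catalan k : ℝ) * x ^ (k+1) = (1 - Real.sqrt (1 - 4*x)) / 2 := by
  have h14 : (0:ℝ) ≤ 1 - 4*x := by linarith
  set s := Real.sqrt (1 - 4*x) with hs_def
  have hs2 : s^2 = 1 - 4*x := Real.sq_sqrt h14
  have hs0 : 0 ≤ s := Real.sqrt_nonneg _
  set g : ℝ := (1 - s) / 2 with hg_def
  have hg0 : 0 ≤ g := by
    have : s ≤ 1 := by nlinarith
    simp only [hg_def]; linarith
  have hghalf : g ≤ 1/2 := by simp only [hg_def]; linarith
  have hgfix : x + g^2 = g := by simp only [hg_def]; nlinarith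
  have hfnn : ∀ k : ℕ, 0 ≤ (catalan k : ℝ) * x ^ (k+1) := fun k => by positivity
  have key : ∀ N, ∑ k ∈ range N, (catalan k : ℝ) * x ^ (k+1) ≤ g := by
    intro N
    induction N with
    | zero => simpa using hg0
    | succ N ih =>
      rw [Finset.sum_range_succ']
      have hnn : 0 ≤ ∑ k ∈ range N, (catalan k : ℝ) * x ^ (k+1) :=
        Finset.sum_nonneg fun k _ => hfnn k
      have h2 : ∑ n ∈ range N, (catalan (n+1) : ℝ) * x ^ (n+1+1)
          ≤ (∑ k ∈ range N, (catalan k : ℝ) * x ^ (k+1)) ^ 2 := by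
        calc ∑ n ∈ range N, (catalan (n+1) : ℝ) * x ^ (n+1+1)
            = ∑ n ∈ range N, ∑ ij ∈ antidiagonal n,
                ((catalan ij.1 : ℝ) * x ^ (ij.1+1)) * ((catalan ij.2 : ℝ) * x ^ (ij.2+1)) :=
              Finset.sum_congr rfl fun n _ => cat_term_eq x n
          _ ≤ _ := triangle_le _ hfnn N
      have h3 : (∑ k ∈ range N, (catalan k : ℝ) * x ^ (k+1)) ^ 2 ≤ g ^ 2 := by
        nlinarith
      simp only [catalan_zero, Nat.cast_one, one_mul, zero_add, pow_one]
      nlinarith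
  have hsum : Summable (fun k : ℕ => (catalan k : ℝ) * x ^ (k+1)) :=
    summable_of_sum_range_le hfnn key
  refine ⟨hsum, ?_⟩
  set L := ∑' k : ℕ, (catalan k : ℝ) * x ^ (k+1) with hL_def
  have hLle : L ≤ g := Real.tsum_le_of_sum_range_le hfnn key
  have hL0 : 0 ≤ L := tsum_nonneg hfnn
  have hnorm : Summable (fun k : ℕ => ‖(catalan k : ℝ) * x ^ (k+1)‖) := by
    simpa only [Real.norm_eq_abs, abs_of_nonneg (hfnn _)] using hsum
  have hcauchy : L * L = ∑' n : ℕ, ∑ ij ∈ antidiagonal n,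
      ((catalan ij.1 : ℝ) * x ^ (ij.1+1)) * ((catalan ij.2 : ℝ) * x ^ (ij.2+1)) :=
    tsum_mul_tsum_eq_tsum_sum_antidiagonal_of_summable_norm hnorm hnorm
  have hshift : L = x + ∑' n : ℕ, (catalan (n+1) : ℝ) * x ^ (n+1+1) := by
    rw [hL_def, Summable.tsum_eq_zero_add hsum]
    simp
  have hLfix : L * L = L - x := by
    rw [hcauchy, tsum_congr fun n => (cat_term_eq x n).symm]
    linarith [hshift]
  have hsL : s = 1 - 2*L := by
    rw [hs_def, show (1:ℝ) - 4*x = (1 - 2*L)^2 by nlinarith]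
    exact Real.sqrt_sq (by simp only [hg_def] at hLle; linarith)
  simp only [hg_def, hsL]; ring

lemma gaussEnt_tangent {x y : ℝ} (hx : 0 < x) (hy : 0 < y) :
    gaussEnt x ≤ gaussEnt y + (x - y) / (2 * Real.log 2 * y) := by
  have hC : (0:ℝ) < 2 * Real.pi * Real.exp 1 := by positivity
  have hlog2 : (0:ℝ) < Real.log 2 := Real.log_pos (by norm_num)
  have hl2 : Real.log 2 ≠ 0 := ne_of_gt hlog2
  have hy' : y ≠ 0 := ne_of_gt hy
  have h1 : Real.log (2*Real.pi*Real.exp 1 * x)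
      = Real.log (2*Real.pi*Real.exp 1) + Real.log x := Real.log_mul (ne_of_gt hC) (ne_of_gt hx)
  have h2 : Real.log (2*Real.pi*Real.exp 1 * y)
      = Real.log (2*Real.pi*Real.exp 1) + Real.log y := Real.log_mul (ne_of_gt hC) (ne_of_gt hy)
  have h3 : Real.log x - Real.log y ≤ (x - y)/y := by
    have h4 := Real.log_le_sub_one_of_pos (show 0 < x/y by positivity)
    rw [Real.log_div (ne_of_gt hx) (ne_of_gt hy)] at h4
    have h5 : x/y - 1 = (x-y)/y := by field_simp
    linarith [h5 ▸ h4]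
  unfold gaussEnt Real.logb
  rw [h1, h2]
  have e1 : (x - y) / (2 * Real.log 2 * y) = ((x-y)/y) * (1/(2*Real.log 2)) := by
    field_simp
  have e2 : (1:ℝ)/2 * ((Real.log (2*Real.pi*Real.exp 1) + Real.log x) / Real.log 2)
      = 1/2 * ((Real.log (2*Real.pi*Real.exp 1) + Real.log y) / Real.log 2)
        + (Real.log x - Real.log y) * (1/(2*Real.log 2)) := by
    field_simp
    ring
  rw [e1, e2]
  exact add_le_add le_rfl (mul_le_mul_of_nonneg_right h3 (by positivity))

lemma gaussEnt_mono {x y : ℝ} (hx : 0 < x) (hxy : x ≤ y) : gaussEnt x ≤ gaussEnt y := by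
  unfold gaussEnt
  have hC : (0:ℝ) < 2 * Real.pi * Real.exp 1 := by positivity
  gcongr
  norm_num

/-- Jensen bound for the AR(1) differential entropy sum:
for `0 < p ≤ 1/2` and `0 < ρ < 1`, the series
`Σ_{k=1}^∞ φ(1 − ρ^{4k})·2·C_{k−1}·((1−p)p)^k` converges and is at most
`2p·φ( ((1 − 4(1−p)p ρ⁴)^{1/2} − (1 − 2p)) / (2p) )`. -/
theorem jensen_bound_ar1_entropy_sum
    (p : ℝ) (hp0 : 0 < p) (hp : p ≤ 1 / 2)
    (ρ : ℝ) (hρ1 : 0 < ρ) (hρ2 : ρ < 1) :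
    Summable (fun k : ℕ =>
      gaussEnt (1 - ρ ^ (4 * (k + 1))) * 2 * (catalan k : ℝ) * ((1 - p) * p) ^ (k + 1)) ∧
    (∑' k : ℕ,
        gaussEnt (1 - ρ ^ (4 * (k + 1))) * 2 * (catalan k : ℝ) * ((1 - p) * p) ^ (k + 1))
      ≤ 2 * p * gaussEnt
          ((Real.sqrt (1 - 4 * (1 - p) * p * ρ ^ 4) - (1 - 2 * p)) / (2 * p)) := by
  have hlog2 : (0:ℝ) < Real.log 2 := Real.log_pos (by norm_num)
  rw [show (1:ℝ) - 4 * (1 - p) * p * ρ ^ 4 = 1 - 4 * ((1 - p) * p * ρ ^ 4) by ring]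
  set q : ℝ := (1 - p) * p with hq_def
  set r : ℝ := ρ ^ 4 with hr_def
  have hq0 : 0 < q := mul_pos (by linarith) hp0
  have hq4 : q ≤ 1/4 := by rw [hq_def]; nlinarith
  have hr0 : 0 < r := by positivity
  have hr1 : r < 1 := by
    rw [hr_def]; exact pow_lt_one₀ (le_of_lt hρ1) hρ2 (by norm_num)
  obtain ⟨hsA, htA⟩ := catSum q (le_of_lt hq0) hq4
  obtain ⟨hsB, htB⟩ := catSum (q*r) (by positivity) (by nlinarith)
  have h12p : (0:ℝ) ≤ 1 - 2*p := by linarith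
  have hsq1 : Real.sqrt (1 - 4*q) = 1 - 2*p := by
    rw [show (1:ℝ) - 4*q = (1-2*p)^2 by rw [hq_def]; ring]
    exact Real.sqrt_sq h12p
  have htA' : ∑' k : ℕ, (catalan k : ℝ) * q^(k+1) = p := by rw [htA, hsq1]; ring
  set s : ℝ := Real.sqrt (1 - 4*(q*r)) with hs_def
  have h4qr : (0:ℝ) ≤ 1 - 4*(q*r) := by nlinarith
  have hs2 : s^2 = 1 - 4*(q*r) := Real.sq_sqrt h4qr
  have hs0 : 0 ≤ s := Real.sqrt_nonneg _
  have hsgt : 1 - 2*p < s := by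
    have hqq : q*r < q := by nlinarith
    have : (1-2*p)^2 < s^2 := by
      rw [hs2, show (1:ℝ)-2*p = Real.sqrt (1-4*q) from hsq1.symm, Real.sq_sqrt (by nlinarith)]
      linarith
    nlinarith
  set m : ℝ := (s - (1 - 2*p)) / (2*p) with hm_def
  have hm0 : 0 < m := div_pos (by linarith) (by linarith)
  have h2pm : 2*p*m = s - (1 - 2*p) := by
    rw [hm_def]; field_simp
  set c : ℝ := 1/(2*Real.log 2 * m) with hc_def
  have hxk : ∀ k : ℕ, ρ^(4*(k+1)) = r^(k+1) := fun k => by rw [hr_def, ← pow_mul]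
  have hxk1 : ∀ k : ℕ, r^(k+1) < 1 := fun k => pow_lt_one₀ hr0.le hr1 (by omega)
  have hxk0 : ∀ k : ℕ, (0:ℝ) < 1 - r^(k+1) := fun k => by linarith [hxk1 k]
  have hxklb : ∀ k : ℕ, 1 - r ≤ 1 - r^(k+1) := by
    intro k
    have h := pow_le_pow_of_le_one hr0.le hr1.le (show 1 ≤ k+1 by omega)
    rw [pow_one] at h
    linarith
  set U : ℕ → ℝ := fun k =>
    (gaussEnt m + c*(1-m)) * 2 * ((catalan k : ℝ) * q^(k+1))
      + (-2*c) * ((catalan k : ℝ) * (q*r)^(k+1)) with hU_def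
  have hsU : Summable U := (hsA.mul_left _).add (hsB.mul_left _)
  have htU : ∑' k, U k = 2 * p * gaussEnt m := by
    rw [hU_def, Summable.tsum_add (hsA.mul_left _) (hsB.mul_left _), tsum_mul_left, tsum_mul_left,
      htA', htB]
    linear_combination (-c) * h2pm
  have hTU : ∀ k : ℕ,
      gaussEnt (1 - ρ ^ (4 * (k + 1))) * 2 * (catalan k : ℝ) * q ^ (k + 1) ≤ U k := by
    intro k
    rw [hxk k]
    have ht := gaussEnt_tangent (hxk0 k) hm0
    have hcz : ((1 - r^(k+1)) - m) / (2*Real.log 2*m) = c * ((1 - r^(k+1)) - m) := by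
      rw [hc_def]; ring
    rw [hcz] at ht
    calc gaussEnt (1 - r^(k+1)) * 2 * (catalan k : ℝ) * q^(k+1)
        = gaussEnt (1 - r^(k+1)) * (2 * ((catalan k : ℝ) * q^(k+1))) := by ring
      _ ≤ (gaussEnt m + c * ((1 - r^(k+1)) - m)) * (2 * ((catalan k : ℝ) * q^(k+1))) :=
          mul_le_mul_of_nonneg_right ht (by positivity)
      _ = U k := by rw [hU_def]; simp only; rw [mul_pow q r]; ring
  have hsT : Summable (fun k : ℕ =>
      gaussEnt (1 - ρ ^ (4 * (k + 1))) * 2 * (catalan k : ℝ) * q ^ (k + 1)) := by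
    set D : ℝ := 2 * (|gaussEnt (1-r)| + |gaussEnt 1|) with hD_def
    apply Summable.of_norm_bounded (g := fun k => D * ((catalan k : ℝ) * q^(k+1))) (hsA.mul_left D)
    intro k
    have hu : gaussEnt (1 - r^(k+1)) ≤ gaussEnt 1 :=
      gaussEnt_mono (hxk0 k) (by nlinarith [pow_pos hr0 (k+1)])
    have hl := gaussEnt_mono (show (0:ℝ) < 1 - r by linarith) (hxklb k)
    have h1 : |gaussEnt (1 - r^(k+1))| ≤ |gaussEnt (1-r)| + |gaussEnt 1| := by
      rw [abs_le]
      constructor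
      · have := neg_abs_le (gaussEnt (1-r))
        have := abs_nonneg (gaussEnt 1)
        linarith
      · have := le_abs_self (gaussEnt 1)
        have := abs_nonneg (gaussEnt (1-r))
        linarith
    have he : gaussEnt (1 - ρ ^ (4 * (k + 1))) * 2 * (catalan k : ℝ) * q^(k+1)
        = gaussEnt (1 - r^(k+1)) * (2 * ((catalan k : ℝ) * q^(k+1))) := by
      rw [hxk k]; ring
    rw [he, Real.norm_eq_abs, abs_mul,
      abs_of_nonneg (show (0:ℝ) ≤ 2 * ((catalan k : ℝ) * q^(k+1)) by positivity)]
    calc |gaussEnt (1 - r^(k+1))| * (2 * ((catalan k : ℝ) * q^(k+1)))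
        ≤ (|gaussEnt (1-r)| + |gaussEnt 1|) * (2 * ((catalan k : ℝ) * q^(k+1))) :=
          mul_le_mul_of_nonneg_right h1 (by positivity)
      _ = D * ((catalan k : ℝ) * q^(k+1)) := by rw [hD_def]; ring
  refine ⟨hsT, ?_⟩
  calc (∑' k : ℕ, gaussEnt (1 - ρ ^ (4 * (k + 1))) * 2 * (catalan k : ℝ) * q ^ (k + 1))
      ≤ ∑' k, U k := Summable.tsum_le_tsum hTU hsT hsU
    _ = 2 * p * gaussEnt m := htU
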